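/- Let P and Q be real symmetric d × d matrices such that the smallest eigenvalue of P satisfies λ_min(P) ≥ ‖Q‖. Then P and P + Q are positive semi-definite and ‖√(P+Q) − √P‖ ≤ √‖Q‖, where √M denotes the positive semi-definite square root and ‖·‖ the operator norm. -/

import Mathlib

open Matrix

section
open scoped ComplexOrder

/-- The positive semidefinite square root of a positive semidefinite matrix
(the definition of `Matrix.PosSemidef.sqrt` in the older Mathlib, since removed). -/
noncomputable def Matrix.PosSemidef.sqrt {n 𝕜 : Type*} [Fintype n] [DecidableEq n] [RCLike 𝕜]
    {A : Matrix n n 𝕜} (hA : A.PosSemidef) : Matrix n n 𝕜 :=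
  hA.1.eigenvectorUnitary.1 * diagonal ((↑) ∘ (√·) ∘ hA.1.eigenvalues) *
  (star hA.1.eigenvectorUnitary : Matrix n n 𝕜)

end

/-- Operator (spectral) norm of a real square matrix, via its action on Euclidean space. -/
noncomputable def opNorm {d : ℕ} (M : Matrix (Fin d) (Fin d) ℝ) : ℝ :=
  ‖Matrix.toEuclideanCLM (𝕜 := ℝ) M‖

namespace SqrtGapAux
variable {d : ℕ}

lemma T_eigen (M : Matrix (Fin d) (Fin d) ℝ) (hM : M.IsHermitian) (i : Fin d) :
    toEuclideanCLM (𝕜 := ℝ) M (hM.eigenvectorBasis i) = hM.eigenvalues i • hM.eigenvectorBasis i := by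
  have h := hM.mulVec_eigenvectorBasis i
  ext j
  simpa using congrFun h j

lemma T_selfAdjoint {M : Matrix (Fin d) (Fin d) ℝ} (hM : M.IsHermitian)
    (x y : EuclideanSpace ℝ (Fin d)) :
    (inner ℝ (toEuclideanCLM (𝕜 := ℝ) M x) y : ℝ) = inner ℝ x (toEuclideanCLM (𝕜 := ℝ) M y) := by
  have h : ContinuousLinearMap.adjoint (toEuclideanCLM (𝕜 := ℝ) M)
      = toEuclideanCLM (𝕜 := ℝ) M := by
    rw [← ContinuousLinearMap.star_eq_adjoint, ← map_star]
    exact congrArg _ hM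
  calc (inner ℝ (toEuclideanCLM (𝕜 := ℝ) M x) y : ℝ)
      = inner ℝ ((ContinuousLinearMap.adjoint (toEuclideanCLM (𝕜 := ℝ) M)) x) y := by rw [h]
    _ = inner ℝ x (toEuclideanCLM (𝕜 := ℝ) M y) := ContinuousLinearMap.adjoint_inner_left _ _ _

/-- Rayleigh lower bound from eigenvalue lower bound. -/
lemma rayleigh_ge {M : Matrix (Fin d) (Fin d) ℝ} (hM : M.IsHermitian) {c : ℝ}
    (h : ∀ i, c ≤ hM.eigenvalues i) (x : EuclideanSpace ℝ (Fin d)) :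
    c * ‖x‖ ^ 2 ≤ inner ℝ x (toEuclideanCLM (𝕜 := ℝ) M x) := by
  set b := hM.eigenvectorBasis
  have hx : ∑ i, (inner ℝ x (b i) : ℝ) * inner ℝ (b i) x = inner ℝ x x := b.sum_inner_mul_inner x x
  have hMx : ∑ i, (inner ℝ x (b i) : ℝ) * inner ℝ (b i) (toEuclideanCLM (𝕜 := ℝ) M x)
      = inner ℝ x (toEuclideanCLM (𝕜 := ℝ) M x) := b.sum_inner_mul_inner _ _
  have hterm : ∀ i, (inner ℝ (b i) (toEuclideanCLM (𝕜 := ℝ) M x) : ℝ)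
      = hM.eigenvalues i * inner ℝ (b i) x := fun i => by
    rw [← T_selfAdjoint hM, T_eigen M hM i, inner_smul_left]
    simp [b]
  calc c * ‖x‖ ^ 2 = ∑ i, c * ((inner ℝ x (b i) : ℝ) * inner ℝ (b i) x) := by
        rw [← Finset.mul_sum, hx, real_inner_self_eq_norm_sq]
    _ ≤ ∑ i, hM.eigenvalues i * ((inner ℝ x (b i) : ℝ) * inner ℝ (b i) x) := by
        refine Finset.sum_le_sum fun i _ => mul_le_mul_of_nonneg_right (h i) ?_
        rw [real_inner_comm x (b i)]
        exact mul_self_nonneg _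
    _ = inner ℝ x (toEuclideanCLM (𝕜 := ℝ) M x) := by
        rw [← hMx]
        refine Finset.sum_congr rfl fun i _ => ?_
        rw [hterm i]; ring

/-- Operator norm bound from eigenvalue bound, for Hermitian matrices. -/
lemma opNorm_le_of_abs_eigenvalues_le {M : Matrix (Fin d) (Fin d) ℝ} (hM : M.IsHermitian) {c : ℝ}
    (hc : 0 ≤ c) (h : ∀ i, |hM.eigenvalues i| ≤ c) : opNorm M ≤ c := by
  refine ContinuousLinearMap.opNorm_le_bound _ hc fun x => ?_
  set b := hM.eigenvectorBasis
  set y := toEuclideanCLM (𝕜 := ℝ) M x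
  have hterm : ∀ i, (inner ℝ (b i) y : ℝ) = hM.eigenvalues i * inner ℝ (b i) x := fun i => by
    rw [← T_selfAdjoint hM, T_eigen M hM i, inner_smul_left]
    simp [b]
  have hterm2 : ∀ i, (inner ℝ y (b i) : ℝ) = hM.eigenvalues i * inner ℝ (b i) x := fun i => by
    rw [real_inner_comm]; exact hterm i
  have h1 : ‖y‖ ^ 2 = ∑ i, (hM.eigenvalues i) ^ 2 * (inner ℝ (b i) x : ℝ) ^ 2 := by
    rw [← real_inner_self_eq_norm_sq, ← b.sum_inner_mul_inner y y]
    refine Finset.sum_congr rfl fun i _ => ?_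
    rw [hterm2 i, hterm i]; ring
  have h2 : ‖x‖ ^ 2 = ∑ i, (inner ℝ (b i) x : ℝ) ^ 2 := by
    rw [← real_inner_self_eq_norm_sq, ← b.sum_inner_mul_inner x x]
    exact Finset.sum_congr rfl fun i _ => by rw [real_inner_comm x (b i)]; ring
  have key : ‖y‖ ^ 2 ≤ (c * ‖x‖) ^ 2 := by
    rw [h1, mul_pow, h2, Finset.mul_sum]
    refine Finset.sum_le_sum fun i _ => mul_le_mul_of_nonneg_right ?_ (sq_nonneg _)
    calc (hM.eigenvalues i) ^ 2 = |hM.eigenvalues i| ^ 2 := (sq_abs _).symm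
      _ ≤ c ^ 2 := pow_le_pow_left₀ (abs_nonneg _) (h i) 2
  exact (pow_le_pow_iff_left₀ (norm_nonneg _) (mul_nonneg hc (norm_nonneg _)) two_ne_zero).mp key

lemma abs_inner_T_le (M : Matrix (Fin d) (Fin d) ℝ) (x : EuclideanSpace ℝ (Fin d)) :
    |(inner ℝ x (toEuclideanCLM (𝕜 := ℝ) M x) : ℝ)| ≤ opNorm M * ‖x‖ ^ 2 := by
  calc |(inner ℝ x (toEuclideanCLM (𝕜 := ℝ) M x) : ℝ)|
      ≤ ‖x‖ * ‖toEuclideanCLM (𝕜 := ℝ) M x‖ := abs_real_inner_le_norm _ _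
    _ ≤ ‖x‖ * (opNorm M * ‖x‖) := by
        refine mul_le_mul_of_nonneg_left ?_ (norm_nonneg _)
        exact ContinuousLinearMap.le_opNorm _ _
    _ = opNorm M * ‖x‖ ^ 2 := by ring

lemma posSemidef_inner {M : Matrix (Fin d) (Fin d) ℝ} (hM : M.PosSemidef)
    (x : EuclideanSpace ℝ (Fin d)) : 0 ≤ (inner ℝ x (toEuclideanCLM (𝕜 := ℝ) M x) : ℝ) := by
  have := hM.dotProduct_mulVec_nonneg (WithLp.equiv 2 _ x)
  simpa [EuclideanSpace.inner_eq_star_dotProduct, dotProduct_comm] using this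

end SqrtGapAux

namespace SqrtGapAux

section
open scoped MatrixOrder

lemma sqrt_eq_cfcSqrt {d : ℕ} {A : Matrix (Fin d) (Fin d) ℝ} (hA : A.PosSemidef) :
    hA.sqrt = CFC.sqrt A := by
  rw [CFC.sqrt_eq_real_sqrt A hA.nonneg, cfcₙ_eq_cfc, hA.1.cfc_eq]
  simp [IsHermitian.cfc, Matrix.PosSemidef.sqrt, Unitary.conjStarAlgAut_apply]

lemma posSemidef_sqrt {d : ℕ} {A : Matrix (Fin d) (Fin d) ℝ} (hA : A.PosSemidef) :
    hA.sqrt.PosSemidef := by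
  rw [sqrt_eq_cfcSqrt]
  exact nonneg_iff_posSemidef.mp (CFC.sqrt_nonneg A)

lemma sqrt_mul_self {d : ℕ} {A : Matrix (Fin d) (Fin d) ℝ} (hA : A.PosSemidef) :
    hA.sqrt * hA.sqrt = A := by
  rw [sqrt_eq_cfcSqrt]
  exact CFC.sqrt_mul_sqrt_self A hA.nonneg

lemma eq_of_sq_eq_sq {d : ℕ} {A B : Matrix (Fin d) (Fin d) ℝ} (hB : B.PosSemidef)
    (hA : A.PosSemidef) (h : B ^ 2 = A ^ 2) : B = A := by
  rw [pow_two, pow_two] at h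
  exact (CFC.mul_self_eq_mul_self_iff B A hB.nonneg hA.nonneg).mp h

end

lemma sqrt_le_eig {d : ℕ} (c : ℝ) {B P : Matrix (Fin d) (Fin d) ℝ} (hB : B.PosSemidef)
    (hBB : B * B = P)
    (hPray : ∀ x : EuclideanSpace ℝ (Fin d), c * ‖x‖ ^ 2 ≤ inner ℝ x (toEuclideanCLM (𝕜 := ℝ) P x))
    (i : Fin d) : Real.sqrt c ≤ hB.1.eigenvalues i := by
  set μ := hB.1.eigenvalues i with hμ_def
  have hμ0 : 0 ≤ μ := hB.eigenvalues_nonneg i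
  set w := hB.1.eigenvectorBasis i with hw_def
  have hw : ‖w‖ = 1 := hB.1.eigenvectorBasis.orthonormal.1 i
  have h1 : toEuclideanCLM (𝕜 := ℝ) B w = μ • w := SqrtGapAux.T_eigen B hB.1 i
  clear_value w
  have h2 : toEuclideanCLM (𝕜 := ℝ) P w = (μ * μ) • w := by
    have hPBB : toEuclideanCLM (𝕜 := ℝ) P
        = toEuclideanCLM (𝕜 := ℝ) B * toEuclideanCLM (𝕜 := ℝ) B := by
      rw [← _root_.map_mul, hBB]
    rw [hPBB, ContinuousLinearMap.mul_apply, h1, _root_.map_smul, h1, smul_smul]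
  have h3 : c ≤ μ * μ := by
    have h4 := hPray w
    rw [h2, inner_smul_right, real_inner_self_eq_norm_sq, hw] at h4
    simpa [hw] using h4
  calc Real.sqrt c ≤ Real.sqrt (μ * μ) := Real.sqrt_le_sqrt h3
    _ = μ := Real.sqrt_mul_self hμ0

lemma E_eig_bound {d : ℕ} (c : ℝ) (hc : 0 ≤ c) (hcpos : 0 < c)
    {A B Q : Matrix (Fin d) (Fin d) ℝ} (hA : A.PosSemidef) (hB : B.PosSemidef)
    (hsyl : A * (A - B) + (A - B) * B = Q)
    (hQbound : ∀ x : EuclideanSpace ℝ (Fin d),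
      |(inner ℝ x (toEuclideanCLM (𝕜 := ℝ) Q x) : ℝ)| ≤ c * ‖x‖ ^ 2)
    (hBray : ∀ x : EuclideanSpace ℝ (Fin d),
      Real.sqrt c * ‖x‖ ^ 2 ≤ inner ℝ x (toEuclideanCLM (𝕜 := ℝ) B x))
    (hE : (A - B).IsHermitian) (i : Fin d) : |hE.eigenvalues i| ≤ Real.sqrt c := by
  set μ := hE.eigenvalues i with hμ_def
  set v := hE.eigenvectorBasis i with hv_def
  have hv : ‖v‖ = 1 := hE.eigenvectorBasis.orthonormal.1 i
  have hEv : toEuclideanCLM (𝕜 := ℝ) (A - B) v = μ • v := SqrtGapAux.T_eigen _ hE i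
  clear_value v
  set qA : ℝ := inner ℝ v (toEuclideanCLM (𝕜 := ℝ) A v) with hqA_def
  set qB : ℝ := inner ℝ v (toEuclideanCLM (𝕜 := ℝ) B v) with hqB_def
  have hqA : 0 ≤ qA := SqrtGapAux.posSemidef_inner hA v
  have hqB : Real.sqrt c ≤ qB := by
    have := hBray v
    rwa [hv, one_pow, mul_one] at this
  have e1 : (inner ℝ v (toEuclideanCLM (𝕜 := ℝ) A (toEuclideanCLM (𝕜 := ℝ) (A - B) v)) : ℝ)
      = μ * qA := by
    rw [hEv, _root_.map_smul, inner_smul_right]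
  have e2 : (inner ℝ v (toEuclideanCLM (𝕜 := ℝ) (A - B) (toEuclideanCLM (𝕜 := ℝ) B v)) : ℝ)
      = μ * qB := by
    rw [← SqrtGapAux.T_selfAdjoint hE, hEv, inner_smul_left, ← hqB_def]
    simp
  have key : (inner ℝ v (toEuclideanCLM (𝕜 := ℝ) Q v) : ℝ) = μ * (qA + qB) := by
    have hsylT : toEuclideanCLM (𝕜 := ℝ) Q
        = toEuclideanCLM (𝕜 := ℝ) A * toEuclideanCLM (𝕜 := ℝ) (A - B)
          + toEuclideanCLM (𝕜 := ℝ) (A - B) * toEuclideanCLM (𝕜 := ℝ) B := by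
      rw [← _root_.map_mul, ← _root_.map_mul, ← _root_.map_add, hsyl]
    rw [hsylT, ContinuousLinearMap.add_apply, ContinuousLinearMap.mul_apply,
      ContinuousLinearMap.mul_apply, inner_add_right, e1, e2]
    ring
  have habs : |μ| * (qA + qB) ≤ c := by
    have h1 := hQbound v
    rw [key, hv, one_pow, mul_one, abs_mul,
      abs_of_nonneg (add_nonneg hqA ((Real.sqrt_nonneg c).trans hqB))] at h1
    exact h1
  have hsc : 0 < Real.sqrt c := Real.sqrt_pos.mpr hcpos
  have h2 : |μ| * Real.sqrt c ≤ Real.sqrt c * Real.sqrt c := by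
    calc |μ| * Real.sqrt c ≤ |μ| * (qA + qB) :=
          mul_le_mul_of_nonneg_left (hqB.trans (le_add_of_nonneg_left hqA)) (abs_nonneg _)
      _ ≤ c := habs
      _ = Real.sqrt c * Real.sqrt c := (Real.mul_self_sqrt hc).symm
  exact le_of_mul_le_mul_right h2 hsc

end SqrtGapAux

/-- If `P`, `Q` are symmetric and the smallest eigenvalue of `P` is at least `‖Q‖`, then
`P` and `P + Q` are positive semi-definite and `‖√(P+Q) − √P‖ ≤ √‖Q‖`. -/
theorem sqrt_gap_of_eigenvalue_bound {d : ℕ} (P Q : Matrix (Fin d) (Fin d) ℝ)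
    (hP : P.IsHermitian) (hQsymm : Q.IsSymm)
    (hmin : ∀ i : Fin d, opNorm Q ≤ hP.eigenvalues i) :
    ∃ (hPpsd : P.PosSemidef) (hPQpsd : (P + Q).PosSemidef),
      opNorm (hPQpsd.sqrt - hPpsd.sqrt) ≤ Real.sqrt (opNorm Q) := by
  classical
  set c := opNorm Q with hc_def
  have hc : 0 ≤ c := norm_nonneg _
  have hQ : Q.IsHermitian := by
    ext i j
    simpa [Matrix.conjTranspose_apply] using congrFun (congrFun hQsymm i) j
  have hPpsd : P.PosSemidef := hP.posSemidef_iff_eigenvalues_nonneg.mpr fun i => hc.trans (hmin i)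
  have hPray : ∀ x : EuclideanSpace ℝ (Fin d),
      c * ‖x‖ ^ 2 ≤ inner ℝ x (toEuclideanCLM (𝕜 := ℝ) P x) :=
    SqrtGapAux.rayleigh_ge hP hmin
  have key_inner : ∀ (M : Matrix (Fin d) (Fin d) ℝ) (x : Fin d → ℝ),
      (inner ℝ ((WithLp.equiv 2 _).symm x)
        (toEuclideanCLM (𝕜 := ℝ) M ((WithLp.equiv 2 _).symm x)) : ℝ)
        = star x ⬝ᵥ (M *ᵥ x) := fun M x => by
          simp [EuclideanSpace.inner_eq_star_dotProduct, dotProduct_comm]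
  have hPQpsd : (P + Q).PosSemidef := by
    refine .of_dotProduct_mulVec_nonneg (hP.add hQ) fun x => ?_
    rw [← key_inner (P + Q) x]
    set x' : EuclideanSpace ℝ (Fin d) := (WithLp.equiv 2 _).symm x
    have hsplit : (inner ℝ x' (toEuclideanCLM (𝕜 := ℝ) (P + Q) x') : ℝ)
        = inner ℝ x' (toEuclideanCLM (𝕜 := ℝ) P x') + inner ℝ x' (toEuclideanCLM (𝕜 := ℝ) Q x') := by
      rw [_root_.map_add, ContinuousLinearMap.add_apply, inner_add_right]
    rw [hsplit]
    have h1 := hPray x'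
    have h2 : -(c * ‖x'‖ ^ 2) ≤ (inner ℝ x' (toEuclideanCLM (𝕜 := ℝ) Q x') : ℝ) :=
      neg_le_of_abs_le (SqrtGapAux.abs_inner_T_le Q x')
    linarith
  refine ⟨hPpsd, hPQpsd, ?_⟩
  set A := hPQpsd.sqrt with hA_def
  set B := hPpsd.sqrt with hB_def
  have hA : A.PosSemidef := SqrtGapAux.posSemidef_sqrt hPQpsd
  have hB : B.PosSemidef := SqrtGapAux.posSemidef_sqrt hPpsd
  have hAA : A * A = P + Q := SqrtGapAux.sqrt_mul_self hPQpsd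
  have hBB : B * B = P := SqrtGapAux.sqrt_mul_self hPpsd
  clear hA_def hB_def
  clear_value A B
  rcases eq_or_lt_of_le hc with hc0 | hcpos
  · -- c = 0 : then Q = 0 and the two square roots agree
    have hTQ : toEuclideanCLM (𝕜 := ℝ) Q = 0 := by
      rw [← norm_eq_zero]
      exact hc0.symm
    have hQ0 : Q = 0 := by
      have := congrArg (toEuclideanCLM (𝕜 := ℝ)).symm hTQ
      simpa using this
    have hBA : B = A := by
      refine SqrtGapAux.eq_of_sq_eq_sq hB hA ?_
      rw [pow_two, pow_two, hAA, hBB, hQ0, add_zero]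
    rw [hBA, sub_self]
    have h0 : opNorm (0 : Matrix (Fin d) (Fin d) ℝ) = 0 := by
      show ‖toEuclideanCLM (𝕜 := ℝ) (0 : Matrix (Fin d) (Fin d) ℝ)‖ = 0
      rw [_root_.map_zero, norm_zero]
    rw [h0]
    exact Real.sqrt_nonneg _
  · -- c > 0
    have hsyl : A * (A - B) + (A - B) * B = Q := by
      rw [Matrix.mul_sub, Matrix.sub_mul, hAA, hBB]
      abel
    have hE : (A - B).IsHermitian := hA.1.sub hB.1
    have hBray : ∀ x : EuclideanSpace ℝ (Fin d),
        Real.sqrt c * ‖x‖ ^ 2 ≤ inner ℝ x (toEuclideanCLM (𝕜 := ℝ) B x) :=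
      SqrtGapAux.rayleigh_ge hB.1 (SqrtGapAux.sqrt_le_eig c hB hBB hPray)
    exact SqrtGapAux.opNorm_le_of_abs_eigenvalues_le hE (Real.sqrt_nonneg _)
      (SqrtGapAux.E_eig_bound c hc hcpos hA hB hsyl (SqrtGapAux.abs_inner_T_le Q) hBray hE)
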